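/- For every n ≥ 0, the number of spanning trees of the fractal lattice G_n equals τ(G_n) = 2^{4^n − 1}. -/

import Mathlib

open scoped Classical

noncomputable section

/-- A finite two-terminal graph: a finite simple graph together with two
distinct distinguished vertices `X` and `Y`. -/
structure TTG where
  V : Type
  [instFintypeV : Fintype V]
  G : SimpleGraph V
  X : V
  Y : V
  hXY : X ≠ Y

attribute [instance] TTG.instFintypeV

namespace TTG

/-- The embedding of the `i`-th copy of `H` (for `i : Fin 4`) into the vertex set of the
cyclic merge of four copies of `H`, in which `Y` of copy `i` is identified with `X` of
copy `i + 1`.  The vertex `X` of copy `i` is represented by the vertex `Y` of copy `i - 1`. -/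
def iota (H : TTG) (i : Fin 4) (a : H.V) : Fin 4 × {v : H.V // v ≠ H.X} :=
  if h : a = H.X then (i - 1, ⟨H.Y, Ne.symm H.hXY⟩) else (i, ⟨a, h⟩)

/-- The cyclic merge of four disjoint copies of `H`: `Y` of copy `0` is identified with `X`
of copy `1` (yielding the vertex `v`), `Y` of copy `1` with `X` of copy `2` (yielding the
new terminal `Y`), `Y` of copy `2` with `X` of copy `3` (yielding the vertex `w`), and `Y`
of copy `3` with `X` of copy `0` (yielding the new terminal `X`).  If `withEdge = true`,
one additional new edge joining `v = (0, Y)` and `w = (2, Y)` is added. -/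
def cyclicStep (withEdge : Bool) (H : TTG) : TTG where
  V := Fin 4 × {v : H.V // v ≠ H.X}
  G := SimpleGraph.fromRel (fun u w =>
        (∃ i a b, H.G.Adj a b ∧ u = H.iota i a ∧ w = H.iota i b) ∨
        (withEdge = true ∧ u = (0, ⟨H.Y, Ne.symm H.hXY⟩) ∧ w = (2, ⟨H.Y, Ne.symm H.hXY⟩)))
  X := (3, ⟨H.Y, Ne.symm H.hXY⟩)
  Y := (1, ⟨H.Y, Ne.symm H.hXY⟩)
  hXY := by
    intro h
    have h1 : (3 : Fin 4) = 1 := congrArg Prod.fst h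
    exact absurd h1 (by decide)

end TTG

/-- `K_2`, with its two vertices as the terminals `X_0` and `Y_0`. -/
def TTG.base : TTG where
  V := Fin 2
  G := ⊤
  X := 0
  Y := 1
  hXY := by decide

/-- The fractal scale-free lattice `G_n`: `G_0 = K_2`, and `G_{n+1}` is the cyclic merge of
four copies of `G_n` together with the one extra edge `e_n` joining `v` and `w`. -/
def fractal : ℕ → TTG
  | 0 => TTG.base
  | n + 1 => TTG.cyclicStep true (fractal n)

/-- The number `τ(G)` of spanning trees of `G`: the number of edge sets `A ⊆ E(G)` for
which the spanning subgraph `(V, A)` is connected and acyclic. -/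
def spanningTreeCount {V : Type} [Fintype V] (G : SimpleGraph V) : ℕ :=
  Nat.card {A : Finset (Sym2 V) // A ⊆ G.edgeFinset ∧
    (SimpleGraph.fromEdgeSet (A : Set (Sym2 V))).Connected ∧
    (SimpleGraph.fromEdgeSet (A : Set (Sym2 V))).IsAcyclic}

section FracProofSection
set_option linter.unusedSectionVars false
set_option maxHeartbeats 1000000

namespace FracProof
open SimpleGraph





variable {α : Type} {β : Type}

lemma reachable_map {G : SimpleGraph α} {G' : SimpleGraph β} (f : α → β)
    (hf : ∀ a b, G.Adj a b → G'.Reachable (f a) (f b)) {u v : α}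
    (h : G.Reachable u v) : G'.Reachable (f u) (f v) := by
  obtain ⟨p⟩ := h
  induction p with
  | nil => exact Reachable.refl _
  | cons h' p ih => exact (hf _ _ h').trans ih

lemma reach_closed {G : SimpleGraph α} {P : α → Prop}
    (h : ∀ u w, G.Adj u w → P u → P w) {u w : α} (hr : G.Reachable u w) (hu : P u) : P w := by
  obtain ⟨p⟩ := hr
  induction p with
  | nil => exact hu
  | cons h' p ih => exact ih (h _ _ h' hu)

lemma isAcyclic_comap {G : SimpleGraph α} {G' : SimpleGraph β} (f : G →g G')
    (hf : Function.Injective f) (h : G'.IsAcyclic) : G.IsAcyclic :=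
  fun _ c hc => h (c.map f) (hc.map hf)

lemma isAcyclic_mono {G G' : SimpleGraph α} (h : G ≤ G') (h' : G'.IsAcyclic) : G.IsAcyclic :=
  isAcyclic_comap (SimpleGraph.Hom.ofLE h) Function.injective_id h'

lemma fromEdgeSet_coe_erase (A : Finset (Sym2 α)) (e : Sym2 α) :
    fromEdgeSet ↑(A.erase e) = fromEdgeSet ↑A \ fromEdgeSet {e} := by
  ext u v
  simp only [fromEdgeSet_adj, Finset.coe_erase, Set.mem_diff, Set.mem_singleton_iff,
    sdiff_adj, Finset.mem_coe]
  constructor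
  · rintro ⟨⟨hA, hne⟩, hv⟩
    exact ⟨⟨hA, hv⟩, fun h => hne h.1⟩
  · rintro ⟨⟨hA, hv⟩, hne⟩
    exact ⟨⟨hA, fun h => hne ⟨h, hv⟩⟩, hv⟩

variable [Fintype α]

lemma edgeFinset_fromEdgeSet_coe (A : Finset (Sym2 α)) (hd : ∀ e ∈ A, ¬e.IsDiag) :
    (fromEdgeSet (↑A : Set (Sym2 α))).edgeFinset = A := by
  ext e
  simp only [mem_edgeFinset, edgeSet_fromEdgeSet, Set.mem_diff, Set.mem_setOf_eq,
    Finset.mem_coe]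
  exact ⟨fun h => h.1, fun h => ⟨h, hd e h⟩⟩

/-- From a connected non-acyclic graph, one can delete an edge keeping it connected. -/
lemma exists_erase_connected (A : Finset (Sym2 α))
    (hconn : (fromEdgeSet (↑A : Set (Sym2 α))).Connected)
    (hnacyc : ¬ (fromEdgeSet (↑A : Set (Sym2 α))).IsAcyclic) :
    ∃ e ∈ A, (fromEdgeSet (↑(A.erase e) : Set (Sym2 α))).Connected := by
  set G := fromEdgeSet (↑A : Set (Sym2 α)) with hG
  rw [isAcyclic_iff_forall_edge_isBridge] at hnacyc
  push_neg at hnacyc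
  obtain ⟨e, he, hbr⟩ := hnacyc
  have heA : e ∈ A := by
    have := (edgeSet_fromEdgeSet (↑A : Set (Sym2 α))) ▸ he
    exact this.1
  refine ⟨e, heA, ?_⟩
  induction e with
  | _ x y =>
    have hadj : G.Adj x y := he
    have hreach : (G \ fromEdgeSet {s(x, y)}).Reachable x y := by
      by_contra hr
      exact hbr hr
    rw [← fromEdgeSet_coe_erase] at hreach
    haveI : Nonempty α := hconn.nonempty
    refine ⟨fun u v => ?_⟩
    have hpre := hconn.preconnected u v
    refine reachable_map id ?_ hpre
    intro a b hab
    by_cases hee : s(a, b) = s(x, y)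
    · rcases Sym2.eq_iff.mp hee with ⟨rfl, rfl⟩ | ⟨rfl, rfl⟩
      · exact hreach
      · exact hreach.symm
    · exact SimpleGraph.Adj.reachable (by
        simp only [fromEdgeSet_adj, Finset.coe_erase, Set.mem_diff, Set.mem_singleton_iff,
          Finset.mem_coe]
        exact ⟨⟨hab.1, fun h => hee h⟩, hab.ne⟩)

lemma card_le_of_connected : ∀ (N : ℕ) (A : Finset (Sym2 α)), A.card ≤ N →
    (fromEdgeSet (↑A : Set (Sym2 α))).Connected → Fintype.card α ≤ A.card + 1 := by
  intro N
  induction N with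
  | zero =>
    intro A hA hconn
    have : A = ∅ := Finset.card_eq_zero.mp (Nat.le_zero.mp hA)
    subst this
    have hsub : Subsingleton α := by
      constructor
      intro u v
      have := hconn.preconnected u v
      simpa [reachable_bot] using
        (by simpa [Finset.coe_empty, fromEdgeSet_empty] using this : (⊥ : SimpleGraph α).Reachable u v)
    simpa using Fintype.card_le_one_iff_subsingleton.mpr hsub
  | succ N ih =>
    intro A hA hconn
    by_cases hacyc : (fromEdgeSet (↑A : Set (Sym2 α))).IsAcyclic
    · have htree : (fromEdgeSet (↑A : Set (Sym2 α))).IsTree := ⟨hconn, hacyc⟩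
      have hcard := htree.card_edgeFinset
      have hsub : (fromEdgeSet (↑A : Set (Sym2 α))).edgeFinset ⊆ A := by
        intro e he
        rw [mem_edgeFinset, edgeSet_fromEdgeSet] at he
        exact he.1
      have := Finset.card_le_card hsub
      omega
    · obtain ⟨e, heA, hconn'⟩ := exists_erase_connected A hconn hacyc
      have hc1 : (A.erase e).card ≤ N := by
        have := Finset.card_erase_of_mem heA
        have hpos := Finset.card_pos.mpr ⟨e, heA⟩
        omega
      have := ih (A.erase e) hc1 hconn'
      have := Finset.card_erase_of_mem heA
      have hpos := Finset.card_pos.mpr ⟨e, heA⟩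
      omega

lemma acyclic_of_connected_card (A : Finset (Sym2 α))
    (hconn : (fromEdgeSet (↑A : Set (Sym2 α))).Connected)
    (hcard : Fintype.card α = A.card + 1) :
    (fromEdgeSet (↑A : Set (Sym2 α))).IsAcyclic := by
  by_contra hnacyc
  obtain ⟨e, heA, hconn'⟩ := exists_erase_connected A hconn hnacyc
  have := card_le_of_connected (A.erase e).card (A.erase e) le_rfl hconn'
  have := Finset.card_erase_of_mem heA
  have hpos := Finset.card_pos.mpr ⟨e, heA⟩
  omega

lemma card_of_tree (A : Finset (Sym2 α)) (hd : ∀ e ∈ A, ¬e.IsDiag)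
    (hconn : (fromEdgeSet (↑A : Set (Sym2 α))).Connected)
    (hacyc : (fromEdgeSet (↑A : Set (Sym2 α))).IsAcyclic) :
    Fintype.card α = A.card + 1 := by
  have htree : (fromEdgeSet (↑A : Set (Sym2 α))).IsTree := ⟨hconn, hacyc⟩
  have := htree.card_edgeFinset
  rw [edgeFinset_fromEdgeSet_coe A hd] at this
  omega

lemma tree_iff_card (A : Finset (Sym2 α)) (hd : ∀ e ∈ A, ¬e.IsDiag)
    (hconn : (fromEdgeSet (↑A : Set (Sym2 α))).Connected) :
    (fromEdgeSet (↑A : Set (Sym2 α))).IsAcyclic ↔ Fintype.card α = A.card + 1 :=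
  ⟨card_of_tree A hd hconn, acyclic_of_connected_card A hconn⟩







variable {α : Type} {x y : α}

/-- Inserting the edge `s(x,y)` into the edge set. -/
lemma fromEdgeSet_coe_insert (A : Finset (Sym2 α)) (e : Sym2 α) :
    fromEdgeSet (↑(insert e A) : Set (Sym2 α)) = fromEdgeSet {e} ⊔ fromEdgeSet ↑A := by
  ext u v
  simp only [fromEdgeSet_adj, Finset.coe_insert, Set.mem_insert_iff, sup_adj,
    Set.mem_singleton_iff, Finset.mem_coe]
  tauto

lemma insert_connected (A : Finset (Sym2 α)) (hxy : x ≠ y)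
    (hgood : ∀ v, (fromEdgeSet (↑A : Set (Sym2 α))).Reachable v x ∨
      (fromEdgeSet (↑A : Set (Sym2 α))).Reachable v y) :
    (fromEdgeSet (↑(insert s(x,y) A) : Set (Sym2 α))).Connected := by
  set G' := fromEdgeSet (↑(insert s(x,y) A) : Set (Sym2 α)) with hG'
  have hle : fromEdgeSet (↑A : Set (Sym2 α)) ≤ G' := by
    apply fromEdgeSet_mono; intro e he; simp only [Finset.coe_insert, Set.mem_insert_iff,
      Finset.mem_coe] at he ⊢; exact Or.inr he
  have hadj : G'.Adj x y := by
    rw [hG', fromEdgeSet_adj]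
    exact ⟨by simp, hxy⟩
  have hgood' : ∀ v, G'.Reachable v x ∨ G'.Reachable v y := by
    intro v
    rcases hgood v with h | h
    · exact Or.inl (h.mono hle)
    · exact Or.inr (h.mono hle)
  haveI : Nonempty α := ⟨x⟩
  refine ⟨fun u v => ?_⟩
  have h1 : ∀ w, G'.Reachable w x := by
    intro w
    rcases hgood' w with h | h
    · exact h
    · exact h.trans hadj.symm.reachable
  exact (h1 u).trans (h1 v).symm

lemma insert_acyclic (A : Finset (Sym2 α)) (hxy : x ≠ y)
    (hacyc : (fromEdgeSet (↑A : Set (Sym2 α))).IsAcyclic)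
    (hnr : ¬ (fromEdgeSet (↑A : Set (Sym2 α))).Reachable x y) :
    (fromEdgeSet (↑(insert s(x,y) A) : Set (Sym2 α))).IsAcyclic := by
  have hxyA : s(x,y) ∉ A := fun h =>
    hnr (SimpleGraph.Adj.reachable ((fromEdgeSet_adj _).mpr ⟨by exact h, hxy⟩))
  set G' := fromEdgeSet (↑(insert s(x,y) A) : Set (Sym2 α)) with hG'
  intro v c hc
  by_cases he : s(x,y) ∈ c.edges
  · have : (G' \ fromEdgeSet {s(x,y)}).Reachable x y :=
      (adj_and_reachable_delete_edges_iff_exists_cycle.mpr ⟨v, c, hc, he⟩).2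
    rw [← fromEdgeSet_coe_erase, Finset.erase_insert hxyA] at this
    exact hnr this
  · have hsub : ∀ e ∈ c.edges, e ∈ (fromEdgeSet (↑A : Set (Sym2 α))).edgeSet := by
      intro e hce
      have h1 := c.edges_subset_edgeSet hce
      rw [hG', edgeSet_fromEdgeSet] at h1
      rw [edgeSet_fromEdgeSet]
      rcases h1 with ⟨h1, h2⟩
      simp only [Finset.coe_insert, Set.mem_insert_iff, Finset.mem_coe] at h1
      rcases h1 with rfl | h1
      · exact absurd hce he
      · exact ⟨h1, h2⟩
    exact hacyc (c.transfer _ hsub) (hc.transfer hsub)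

variable [Fintype α]

lemma forest_iff_card (A : Finset (Sym2 α)) (hd : ∀ e ∈ A, ¬e.IsDiag) (hxy : x ≠ y)
    (hgood : ∀ v, (fromEdgeSet (↑A : Set (Sym2 α))).Reachable v x ∨
      (fromEdgeSet (↑A : Set (Sym2 α))).Reachable v y)
    (hnr : ¬ (fromEdgeSet (↑A : Set (Sym2 α))).Reachable x y) :
    ((fromEdgeSet (↑A : Set (Sym2 α))).IsAcyclic ↔ Fintype.card α = A.card + 2) := by
  have hxyA : s(x,y) ∉ A := fun h =>
    hnr (SimpleGraph.Adj.reachable ((fromEdgeSet_adj _).mpr ⟨by exact h, hxy⟩))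
  have hd' : ∀ e ∈ insert s(x,y) A, ¬e.IsDiag := by
    intro e he
    rcases Finset.mem_insert.mp he with rfl | he
    · simpa using hxy
    · exact hd e he
  have hconn' := insert_connected A hxy hgood
  have hcard : (insert s(x,y) A).card = A.card + 1 := Finset.card_insert_of_notMem hxyA
  constructor
  · intro hacyc
    have := card_of_tree (insert s(x,y) A) hd' hconn' (insert_acyclic A hxy hacyc hnr)
    omega
  · intro hcard2
    have hacyc' : (fromEdgeSet (↑(insert s(x,y) A) : Set (Sym2 α))).IsAcyclic := by
      apply acyclic_of_connected_card _ hconn'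
      omega
    refine isAcyclic_mono ?_ hacyc'
    apply fromEdgeSet_mono
    intro e he
    simp only [Finset.coe_insert, Set.mem_insert_iff, Finset.mem_coe] at he ⊢
    exact Or.inr he






/-- Vertex type of the cyclic merge. -/
abbrev W (H : TTG) : Type := Fin 4 × {v : H.V // v ≠ H.X}

/-- The four corner vertices. -/
def cornr (H : TTG) (k : Fin 4) : W H := (k, ⟨H.Y, Ne.symm H.hXY⟩)

/-- The chord edge. -/
def chord (H : TTG) : Sym2 (W H) := s(cornr H 0, cornr H 2)

variable {H : TTG}

lemma cornr_injective : Function.Injective (cornr H) := by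
  intro a b h
  exact congrArg Prod.fst h

lemma iota_X (i : Fin 4) : H.iota i H.X = cornr H (i - 1) := by
  simp [TTG.iota, cornr]

lemma iota_Y (i : Fin 4) : H.iota i H.Y = cornr H i := by
  simp [TTG.iota, cornr, Ne.symm H.hXY]

lemma iota_ne {a : H.V} (h : a ≠ H.X) (i : Fin 4) : H.iota i a = (i, ⟨a, h⟩) := by
  simp [TTG.iota, h]

lemma iota_eq_cases {i j : Fin 4} {a b : H.V} (h : H.iota i a = H.iota j b) :
    (a = H.X ∧ b = H.X ∧ i = j) ∨
    (a ≠ H.X ∧ b ≠ H.X ∧ i = j ∧ a = b) ∨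
    (a = H.X ∧ b ≠ H.X ∧ b = H.Y ∧ j = i - 1) ∨
    (a ≠ H.X ∧ b = H.X ∧ a = H.Y ∧ i = j - 1) := by
  by_cases ha : a = H.X <;> by_cases hb : b = H.X
  · rw [ha, hb, iota_X, iota_X] at h
    have : i - 1 = j - 1 := congrArg Prod.fst h
    exact Or.inl ⟨ha, hb, sub_left_inj.mp this⟩
  · rw [ha, iota_X, iota_ne hb] at h
    refine Or.inr (Or.inr (Or.inl ⟨ha, hb, ?_, ?_⟩))
    · have := congrArg Prod.snd h
      simpa [eq_comm, cornr] using congrArg Subtype.val this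
    · exact (congrArg Prod.fst h).symm
  · rw [hb, iota_X, iota_ne ha] at h
    refine Or.inr (Or.inr (Or.inr ⟨ha, hb, ?_, ?_⟩))
    · have := congrArg Prod.snd h
      simpa [cornr] using congrArg Subtype.val this
    · exact congrArg Prod.fst h
  · rw [iota_ne ha, iota_ne hb] at h
    refine Or.inr (Or.inl ⟨ha, hb, congrArg Prod.fst h, ?_⟩)
    have := congrArg Prod.snd h
    simpa using congrArg Subtype.val this

lemma iota_injective (i : Fin 4) : Function.Injective (H.iota i) := by
  intro a b h
  rcases iota_eq_cases h with ⟨rfl, rfl, _⟩ | ⟨_, _, _, h⟩ | ⟨rfl, _, rfl, hj⟩ |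
    ⟨_, rfl, rfl, hi⟩
  · rfl
  · exact h
  · exact absurd (sub_eq_self.mp hj.symm).symm (by decide)
  · exact absurd (sub_eq_self.mp hi.symm).symm (by decide)

lemma fin4_sub_one_ne (i : Fin 4) : i - 1 ≠ i := by
  intro h
  exact absurd (sub_eq_self.mp h) (by decide)

lemma fin4_sub_two_ne (i : Fin 4) : i - 1 - 1 ≠ i := by
  intro h
  rw [sub_sub] at h
  exact absurd (sub_eq_self.mp h) (by decide)

lemma pair_eq {i j : Fin 4} {a b c d : H.V} (hab : a ≠ b) (hcd : c ≠ d)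
    (h1 : H.iota i a = H.iota j c) (h2 : H.iota i b = H.iota j d) :
    i = j ∧ a = c ∧ b = d := by
  rcases iota_eq_cases h1 with ⟨ha, hc, hij⟩ | ⟨ha, hc, hij, hac⟩ | ⟨ha, hc, hcY, hj⟩ |
      ⟨ha, hc, haY, hi⟩ <;>
    rcases iota_eq_cases h2 with ⟨hb, hd, hij'⟩ | ⟨hb, hd, hij', hbd⟩ | ⟨hb, hd, hdY, hj'⟩ |
      ⟨hb, hd, hbY, hi'⟩
  · exact absurd (ha.trans hb.symm) hab
  · exact ⟨hij, ha.trans hc.symm, hbd⟩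
  · exact absurd (ha.trans hb.symm) hab
  · exact absurd (hc.trans hd.symm) hcd
  · exact ⟨hij', hac, hb.trans hd.symm⟩
  · exact ⟨hij, hac, hbd⟩
  · exact absurd (hij ▸ hj' : j = j - 1).symm (fin4_sub_one_ne j)
  · rw [hij] at hi'
    exact absurd hi'.symm (fin4_sub_one_ne j)
  · exact absurd (ha.trans hb.symm) hab
  · rw [hij'] at hj
    exact absurd hj.symm (fin4_sub_one_ne j)
  · exact absurd (ha.trans hb.symm) hab
  · rw [hj] at hi'
    exact absurd hi'.symm (fin4_sub_two_ne i)
  · exact absurd (hc.trans hd.symm) hcd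
  · rw [hij'] at hi
    exact absurd hi.symm (fin4_sub_one_ne j)
  · rw [hj'] at hi
    exact absurd hi.symm (fin4_sub_two_ne i)
  · exact absurd (hc.trans hd.symm) hcd

lemma iota_eq_cornr {i k : Fin 4} {a : H.V} (h : H.iota i a = cornr H k) :
    (a ≠ H.X ∧ a = H.Y ∧ i = k) ∨ (a = H.X ∧ i - 1 = k) := by
  by_cases ha : a = H.X
  · rw [ha, iota_X] at h
    exact Or.inr ⟨ha, congrArg Prod.fst h⟩
  · rw [iota_ne ha] at h
    refine Or.inl ⟨ha, ?_, congrArg Prod.fst h⟩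
    have := congrArg Prod.snd h
    simpa [cornr] using congrArg Subtype.val this




variable {H : TTG}

/-- Edge map of the `i`-th copy. -/
def emap (H : TTG) (i : Fin 4) : Sym2 H.V → Sym2 (W H) := Sym2.map (H.iota i)

lemma emap_injective (i : Fin 4) : Function.Injective (emap H i) :=
  Sym2.map.injective (iota_injective i)

lemma emap_eq_emap {i j : Fin 4} {e e' : Sym2 H.V} (he : ¬e.IsDiag) (he' : ¬e'.IsDiag)
    (h : emap H i e = emap H j e') : i = j ∧ e = e' := by
  induction e with
  | _ a b =>
  induction e' with
  | _ c d =>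
  rw [Sym2.mk_isDiag_iff] at he he'
  unfold emap at h
  rw [Sym2.map_pair_eq, Sym2.map_pair_eq, Sym2.eq_iff] at h
  rcases h with ⟨h1, h2⟩ | ⟨h1, h2⟩
  · obtain ⟨hij, hac, hbd⟩ := pair_eq he he' h1 h2
    exact ⟨hij, by rw [hac, hbd]⟩
  · obtain ⟨hij, had, hbc⟩ := pair_eq he (Ne.symm he') h1 h2
    exact ⟨hij, by rw [had, hbc, Sym2.eq_swap]⟩

lemma emap_ne_chord {i : Fin 4} {e : Sym2 H.V} (he : ¬e.IsDiag) : emap H i e ≠ chord H := by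
  induction e with
  | _ a b =>
  rw [Sym2.mk_isDiag_iff] at he
  unfold emap chord
  rw [Sym2.map_pair_eq]
  intro heq
  rcases Sym2.eq_iff.mp heq with ⟨h1, h2⟩ | ⟨h1, h2⟩ <;>
    rcases iota_eq_cornr h1 with ⟨ha, haY, hi⟩ | ⟨ha, hi⟩ <;>
    rcases iota_eq_cornr h2 with ⟨hb, hbY, hi'⟩ | ⟨hb, hi'⟩
  · exact he (haY.trans hbY.symm)
  · rw [hi] at hi'; exact absurd hi' (by decide)
  · rw [hi'] at hi; exact absurd hi (by decide)
  · exact he (ha.trans hb.symm)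
  · exact he (haY.trans hbY.symm)
  · rw [hi] at hi'; exact absurd hi' (by decide)
  · rw [hi'] at hi; exact absurd hi (by decide)
  · exact he (ha.trans hb.symm)

variable (B : Fin 4 → Finset (Sym2 H.V)) (c : Bool)

/-- Assembling an edge set of the merge out of four copy edge-sets and a chord bit. -/
def assemble (H : TTG) (B : Fin 4 → Finset (Sym2 H.V)) (c : Bool) : Finset (Sym2 (W H)) :=
  (Finset.univ.biUnion fun i => (B i).image (emap H i)) ∪ (if c then {chord H} else ∅)

lemma mem_assemble {e : Sym2 (W H)} :
    e ∈ assemble H B c ↔ (∃ i, ∃ b ∈ B i, e = emap H i b) ∨ (c = true ∧ e = chord H) := by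
  unfold assemble
  rw [Finset.mem_union, Finset.mem_biUnion]
  constructor
  · rintro (⟨i, _, hb⟩ | h)
    · rw [Finset.mem_image] at hb
      obtain ⟨b, hbB, hbe⟩ := hb
      exact Or.inl ⟨i, b, hbB, hbe.symm⟩
    · cases c with
      | false => simp at h
      | true => exact Or.inr ⟨rfl, by simpa using h⟩
  · rintro (⟨i, b, hbB, rfl⟩ | ⟨rfl, rfl⟩)
    · exact Or.inl ⟨i, Finset.mem_univ i, Finset.mem_image.mpr ⟨b, hbB, rfl⟩⟩
    · simp

lemma nondiag_of_mem_edgeFinset {G : SimpleGraph H.V} {e : Sym2 H.V}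
    (h : e ∈ G.edgeFinset) : ¬e.IsDiag :=
  G.not_isDiag_of_mem_edgeSet (mem_edgeFinset.mp h)

/-- The inverse of `assemble`. -/
def extract (H : TTG) (A : Finset (Sym2 (W H))) : (Fin 4 → Finset (Sym2 H.V)) × Bool :=
  (fun i => H.G.edgeFinset.filter (fun b => emap H i b ∈ A),
    if chord H ∈ A then true else false)

lemma extract_fst_subset (A : Finset (Sym2 (W H))) (i : Fin 4) :
    (extract H A).1 i ⊆ H.G.edgeFinset := fun _ he => (Finset.mem_filter.mp he).1

/-- Adjacency in the cyclic merge, classified. -/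
lemma step_adj {u w : W H} : (TTG.cyclicStep true H).G.Adj u w ↔
    u ≠ w ∧ ((∃ i a b, H.G.Adj a b ∧ u = H.iota i a ∧ w = H.iota i b) ∨
      ((u = cornr H 0 ∧ w = cornr H 2) ∨ (u = cornr H 2 ∧ w = cornr H 0))) := by
  show SimpleGraph.Adj (SimpleGraph.fromRel _) u w ↔ _
  rw [SimpleGraph.fromRel_adj]
  constructor
  · rintro ⟨hne, (⟨i, a, b, hab, hu, hw⟩ | ⟨_, hu, hw⟩) | (⟨i, a, b, hab, hw, hu⟩ | ⟨_, hw, hu⟩)⟩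
    · exact ⟨hne, Or.inl ⟨i, a, b, hab, hu, hw⟩⟩
    · exact ⟨hne, Or.inr (Or.inl ⟨hu, hw⟩)⟩
    · exact ⟨hne, Or.inl ⟨i, b, a, hab.symm, hu, hw⟩⟩
    · exact ⟨hne, Or.inr (Or.inr ⟨hu, hw⟩)⟩
  · rintro ⟨hne, ⟨i, a, b, hab, hu, hw⟩ | ⟨hu, hw⟩ | ⟨hu, hw⟩⟩
    · exact ⟨hne, Or.inl (Or.inl ⟨i, a, b, hab, hu, hw⟩)⟩
    · exact ⟨hne, Or.inl (Or.inr ⟨rfl, hu, hw⟩)⟩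
    · exact ⟨hne, Or.inr (Or.inr ⟨rfl, hw, hu⟩)⟩

lemma cornr_ne_cornr : cornr H 0 ≠ cornr H 2 := by
  intro h
  have : (0 : Fin 4) = 2 := congrArg Prod.fst h
  exact absurd this (by decide)

lemma mem_edgeFinset_step {e : Sym2 (W H)} :
    e ∈ (TTG.cyclicStep true H).G.edgeFinset ↔
      (∃ i, ∃ b ∈ H.G.edgeFinset, e = emap H i b) ∨ e = chord H := by
  refine Iff.trans mem_edgeFinset ?_
  induction e with
  | _ u w =>
  refine Iff.trans (Iff.trans (mem_edgeSet _) step_adj) ?_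
  constructor
  · rintro ⟨hne, ⟨i, a, b, hab, rfl, rfl⟩ | ⟨rfl, rfl⟩ | ⟨rfl, rfl⟩⟩
    · exact Or.inl ⟨i, s(a, b), mem_edgeFinset.mpr hab, by rw [emap, Sym2.map_pair_eq]⟩
    · exact Or.inr rfl
    · exact Or.inr (Sym2.eq_swap)
  · rintro (⟨i, b', hb', he⟩ | he)
    · induction b' with
      | _ a b =>
      rw [emap, Sym2.map_pair_eq] at he
      have hab : H.G.Adj a b := mem_edgeFinset.mp hb'
      rcases Sym2.eq_iff.mp he with ⟨rfl, rfl⟩ | ⟨rfl, rfl⟩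
      · exact ⟨fun h => hab.ne (iota_injective i h), Or.inl ⟨i, a, b, hab, rfl, rfl⟩⟩
      · exact ⟨fun h => hab.ne (iota_injective i h.symm), Or.inl ⟨i, b, a, hab.symm, rfl, rfl⟩⟩
    · rcases Sym2.eq_iff.mp he with ⟨rfl, rfl⟩ | ⟨rfl, rfl⟩
      · exact ⟨cornr_ne_cornr, Or.inr (Or.inl ⟨rfl, rfl⟩)⟩
      · exact ⟨Ne.symm cornr_ne_cornr, Or.inr (Or.inr ⟨rfl, rfl⟩)⟩

lemma assemble_extract {A : Finset (Sym2 (W H))}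
    (hA : A ⊆ (TTG.cyclicStep true H).G.edgeFinset) :
    assemble H (extract H A).1 (extract H A).2 = A := by
  ext e
  rw [mem_assemble]
  constructor
  · rintro (⟨i, b, hbB, rfl⟩ | ⟨hc, rfl⟩)
    · exact (Finset.mem_filter.mp hbB).2
    · simp only [extract] at hc
      split_ifs at hc with h
      exact h
  · intro he
    rcases mem_edgeFinset_step.mp (hA he) with ⟨i, b, hb', rfl⟩ | rfl
    · exact Or.inl ⟨i, b, Finset.mem_filter.mpr ⟨hb', he⟩, rfl⟩
    · refine Or.inr ⟨?_, rfl⟩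
      simp only [extract]
      rw [if_pos he]

lemma extract_assemble (hB : ∀ i, B i ⊆ H.G.edgeFinset) :
    (extract H (assemble H B c)).1 = B ∧ (extract H (assemble H B c)).2 = c := by
  constructor
  · funext i
    ext b
    simp only [extract, Finset.mem_filter]
    constructor
    · rintro ⟨hbE, hmem⟩
      rcases (mem_assemble _ _).mp hmem with ⟨j, b', hb', heq⟩ | ⟨_, heq⟩
      · obtain ⟨rfl, rfl⟩ := emap_eq_emap (nondiag_of_mem_edgeFinset hbE)
          (nondiag_of_mem_edgeFinset (hB j hb')) heq
        exact hb'
      · exact absurd heq (emap_ne_chord (nondiag_of_mem_edgeFinset hbE))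
    · intro hb
      exact ⟨hB i hb, (mem_assemble _ _).mpr (Or.inl ⟨i, b, hb, rfl⟩)⟩
  · simp only [extract]
    split_ifs with h
    · rcases (mem_assemble _ _).mp h with ⟨j, b', hb', heq⟩ | ⟨hc, _⟩
      · exact absurd heq.symm (emap_ne_chord (nondiag_of_mem_edgeFinset (hB j hb')))
      · exact hc.symm
    · cases c with
      | false => rfl
      | true => exact absurd ((mem_assemble _ _).mpr (Or.inr ⟨rfl, rfl⟩)) h

lemma card_assemble (hB : ∀ i, B i ⊆ H.G.edgeFinset) :
    (assemble H B c).card = (∑ i, (B i).card) + (if c then 1 else 0) := by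
  unfold assemble
  rw [Finset.card_union_of_disjoint, Finset.card_biUnion]
  · congr 1
    · exact Finset.sum_congr rfl fun i _ =>
        Finset.card_image_of_injective _ (emap_injective i)
    · cases c <;> simp
  · intro i _ j _ hij
    rw [Function.onFun, Finset.disjoint_left]
    intro e hei hej
    rw [Finset.mem_image] at hei hej
    obtain ⟨b, hb, rfl⟩ := hei
    obtain ⟨b', hb', heq⟩ := hej
    exact hij ((emap_eq_emap (nondiag_of_mem_edgeFinset (hB j hb'))
      (nondiag_of_mem_edgeFinset (hB i hb)) heq).1).symm
  · rw [Finset.disjoint_right]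
    intro e he hemem
    cases c with
    | false => simp at he
    | true =>
      have : e = chord H := by simpa using he
      subst this
      rw [Finset.mem_biUnion] at hemem
      obtain ⟨i, _, hi⟩ := hemem
      rw [Finset.mem_image] at hi
      obtain ⟨b, hb, heq⟩ := hi
      exact emap_ne_chord (nondiag_of_mem_edgeFinset (hB i hb)) heq




variable {H : TTG}

/-- The spanning subgraph of a copy determined by an edge set. -/
def pieceG (H : TTG) (B : Finset (Sym2 H.V)) : SimpleGraph H.V := fromEdgeSet ↑B

/-- The spanning subgraph of the merge determined by an edge set. -/
def wholeG (H : TTG) (A : Finset (Sym2 (W H))) : SimpleGraph (W H) := fromEdgeSet ↑A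

/-- Whether a copy's edge set connects the two terminals. -/
def conn (H : TTG) (B : Finset (Sym2 H.V)) : Prop := (pieceG H B).Reachable H.X H.Y

/-- The pattern of a configuration: the set of copies connecting their terminals. -/
def patOf (H : TTG) (B : Fin 4 → Finset (Sym2 H.V)) : Finset (Fin 4) :=
  Finset.univ.filter (fun i => conn H (B i))

lemma mem_patOf {B : Fin 4 → Finset (Sym2 H.V)} {m : Fin 4} :
    m ∈ patOf H B ↔ conn H (B m) := by
  simp [patOf]

/-- The abstract pattern graph on the four corners. -/
def patG (T : Finset (Fin 4)) (c : Bool) : SimpleGraph (Fin 4) where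
  Adj p q := p ≠ q ∧
    (((∃ m ∈ T, p = m - 1 ∧ q = m) ∨ (c = true ∧ p = 0 ∧ q = 2)) ∨
     ((∃ m ∈ T, q = m - 1 ∧ p = m) ∨ (c = true ∧ q = 0 ∧ p = 2)))
  symm := by
    constructor
    rintro p q ⟨hne, h⟩
    exact ⟨hne.symm, h.symm⟩
  loopless := ⟨fun p h => h.1 rfl⟩

lemma patG_adj_of_mem {T : Finset (Fin 4)} {c : Bool} {m : Fin 4} (hm : m ∈ T) :
    (patG T c).Adj (m - 1) m :=
  ⟨fin4_sub_one_ne m, Or.inl (Or.inl ⟨m, hm, rfl, rfl⟩)⟩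

lemma patG_adj_chord {T : Finset (Fin 4)} {c : Bool} (hc : c = true) :
    (patG T c).Adj 0 2 :=
  ⟨by decide, Or.inl (Or.inr ⟨hc, rfl, rfl⟩)⟩

variable {B : Fin 4 → Finset (Sym2 H.V)} {c : Bool}

lemma piece_adj {D : Finset (Sym2 H.V)} (hD : D ⊆ H.G.edgeFinset) {a b : H.V}
    (h : s(a, b) ∈ D) : (pieceG H D).Adj a b := by
  refine ⟨by exact h, ?_⟩
  intro hab
  exact nondiag_of_mem_edgeFinset (hD h) (by rw [hab]; exact Sym2.mk_isDiag_iff.mpr rfl)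

lemma adj_lift (hB : ∀ i, B i ⊆ H.G.edgeFinset) {i : Fin 4} {a b : H.V}
    (h : (pieceG H (B i)).Adj a b) :
    (wholeG H (assemble H B c)).Adj (H.iota i a) (H.iota i b) := by
  refine ⟨?_, fun hh => h.ne (iota_injective i hh)⟩
  show s(H.iota i a, H.iota i b) ∈ (assemble H B c : Set (Sym2 (W H)))
  have : s(H.iota i a, H.iota i b) = emap H i s(a, b) := by
    rw [emap, Sym2.map_pair_eq]
  rw [this]
  exact_mod_cast (mem_assemble B c).mpr (Or.inl ⟨i, s(a, b), h.1, rfl⟩)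

lemma reach_lift (hB : ∀ i, B i ⊆ H.G.edgeFinset) {i : Fin 4} {a b : H.V}
    (h : (pieceG H (B i)).Reachable a b) :
    (wholeG H (assemble H B c)).Reachable (H.iota i a) (H.iota i b) :=
  reachable_map (H.iota i) (fun _ _ hab => (adj_lift hB hab).reachable) h

lemma chord_adj (hc : c = true) :
    (wholeG H (assemble H B c)).Adj (cornr H 0) (cornr H 2) := by
  refine ⟨?_, cornr_ne_cornr⟩
  exact_mod_cast (mem_assemble B c).mpr (Or.inr ⟨hc, rfl⟩)

lemma patG_reach_lift (hB : ∀ i, B i ⊆ H.G.edgeFinset) {j k : Fin 4}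
    (h : (patG (patOf H B) c).Reachable j k) :
    (wholeG H (assemble H B c)).Reachable (cornr H j) (cornr H k) := by
  refine reachable_map (cornr H) ?_ h
  rintro p q ⟨hne, hrel⟩
  have main : ∀ p' q' : Fin 4,
      ((∃ m ∈ patOf H B, p' = m - 1 ∧ q' = m) ∨ (c = true ∧ p' = 0 ∧ q' = 2)) →
      (wholeG H (assemble H B c)).Reachable (cornr H p') (cornr H q') := by
    rintro p' q' (⟨m, hm, rfl, rfl⟩ | ⟨hc, rfl, rfl⟩)
    · have := reach_lift (c := c) hB (mem_patOf.mp hm)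
      rwa [iota_X, iota_Y] at this
    · exact (chord_adj hc).reachable
  rcases hrel with h' | h'
  · exact main p q h'
  · exact (main q p h').symm

lemma whole_adj_cases (hB : ∀ i, B i ⊆ H.G.edgeFinset) {u w : W H}
    (h : (wholeG H (assemble H B c)).Adj u w) :
    (∃ i a b, s(a, b) ∈ B i ∧ u = H.iota i a ∧ w = H.iota i b) ∨
    (c = true ∧ ((u = cornr H 0 ∧ w = cornr H 2) ∨ (u = cornr H 2 ∧ w = cornr H 0))) := by
  obtain ⟨hmem, hne⟩ := h
  have hmem' : s(u, w) ∈ assemble H B c := hmem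
  rcases (mem_assemble B c).mp hmem' with ⟨i, b, hb, heq⟩ | ⟨hc, heq⟩
  · induction b with
    | _ a' b' =>
    rw [emap, Sym2.map_pair_eq] at heq
    rcases Sym2.eq_iff.mp heq with ⟨h1, h2⟩ | ⟨h1, h2⟩
    · exact Or.inl ⟨i, a', b', hb, h1, h2⟩
    · exact Or.inl ⟨i, b', a', Sym2.eq_swap ▸ hb, h1, h2⟩
  · unfold chord at heq
    rcases Sym2.eq_iff.mp heq with ⟨h1, h2⟩ | ⟨h1, h2⟩
    · exact Or.inr ⟨hc, Or.inl ⟨h1, h2⟩⟩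
    · exact Or.inr ⟨hc, Or.inr ⟨h1, h2⟩⟩

/-- Every vertex of a copy whose piece-component misses both terminals would be
trapped: reachability in the whole graph stays inside the image of the component. -/
lemma piece_good_of_corner_reach (hB : ∀ i, B i ⊆ H.G.edgeFinset)
    (hcr : ∀ u : W H, ∃ k, (wholeG H (assemble H B c)).Reachable u (cornr H k)) :
    ∀ (i : Fin 4) (x : H.V),
      (pieceG H (B i)).Reachable x H.X ∨ (pieceG H (B i)).Reachable x H.Y := by
  intro i x
  by_contra hcon
  push_neg at hcon
  obtain ⟨hnX, hnY⟩ := hcon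
  set R : Set H.V := {z | (pieceG H (B i)).Reachable x z} with hR
  have hXR : H.X ∉ R := hnX
  have hYR : H.Y ∉ R := hnY
  set P : W H → Prop := fun w => ∃ z ∈ R, w = H.iota i z with hP
  have hclosed : ∀ u w, (wholeG H (assemble H B c)).Adj u w → P u → P w := by
    rintro u w hadj ⟨z, hzR, rfl⟩
    rcases whole_adj_cases hB hadj with ⟨j, a, b, hab, h1, h2⟩ | ⟨_, hchord⟩
    · rcases iota_eq_cases h1 with ⟨hz, ha, hij⟩ | ⟨hz, ha, hij, hza⟩ | ⟨hz, _, _, _⟩ |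
        ⟨hz, ha, hzY, hij⟩
      · exact absurd (hz ▸ hzR) hXR
      · subst hza
        subst hij
        have : (pieceG H (B i)).Adj z b := piece_adj (hB i) hab
        exact ⟨b, Reachable.trans hzR this.reachable, h2⟩
      · exact absurd (hz ▸ hzR) hXR
      · exact absurd (hzY ▸ hzR) hYR
    · rcases hchord with ⟨h1, _⟩ | ⟨h1, _⟩ <;>
      · rcases iota_eq_cornr h1 with ⟨_, hzY, _⟩ | ⟨hz, _⟩
        · exact absurd (hzY ▸ hzR) hYR
        · exact absurd (hz ▸ hzR) hXR
  obtain ⟨k, hreach⟩ := hcr (H.iota i x)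
  have hbase : P (H.iota i x) := ⟨x, Reachable.refl x, rfl⟩
  obtain ⟨z, hzR, hzeq⟩ := reach_closed hclosed hreach hbase
  rcases iota_eq_cornr hzeq.symm with ⟨_, hzY, _⟩ | ⟨hz, _⟩
  · exact absurd (hzY ▸ hzR) hYR
  · exact absurd (hz ▸ hzR) hXR

/-- Projection of whole-graph reachability between corners to the pattern graph. -/
lemma pat_reach_of_whole (hB : ∀ i, B i ⊆ H.G.edgeFinset) {j k : Fin 4}
    (h : (wholeG H (assemble H B c)).Reachable (cornr H j) (cornr H k)) :
    (patG (patOf H B) c).Reachable j k := by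
  set PG := patG (patOf H B) c with hPG
  set P : W H → Prop := fun u => ∀ (m : Fin 4) (z : H.V), u = H.iota m z →
    ((pieceG H (B m)).Reachable z H.Y → PG.Reachable j m) ∧
    ((pieceG H (B m)).Reachable z H.X → PG.Reachable j (m - 1)) with hPdef
  have hcornr : ∀ (p : Fin 4), P (cornr H p) →
      (PG.Reachable j p ∧ ((pieceG H (B p)).Reachable H.Y H.X → PG.Reachable j (p - 1))) := by
    intro p hp
    have h1 := hp p H.Y (iota_Y p).symm
    exact ⟨h1.1 (Reachable.refl _), h1.2⟩
  have hcornrP : ∀ (p : Fin 4), PG.Reachable j p → P (cornr H p) := by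
    intro p hjp m z hrep
    rcases iota_eq_cornr hrep.symm with ⟨_, hzY, hmp⟩ | ⟨hz, hmp⟩
    · subst hzY
      subst hmp
      constructor
      · intro _; exact hjp
      · intro hYX
        have : conn H (B m) := Reachable.symm hYX
        exact hjp.trans (patG_adj_of_mem (mem_patOf.mpr this)).symm.reachable
    · subst hz
      constructor
      · intro hXY
        have hadj := patG_adj_of_mem (T := patOf H B) (c := c) (mem_patOf.mpr hXY)
        rw [hmp] at hadj
        exact hjp.trans hadj.reachable
      · intro _
        rw [hmp]
        exact hjp
  have hclosed : ∀ u w, (wholeG H (assemble H B c)).Adj u w → P u → P w := by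
    intro u w hadj hPu
    rcases whole_adj_cases hB hadj with ⟨j', a, b, hab, h1, h2⟩ | ⟨hc, hchord⟩
    · -- copy edge from `H.iota j' a` to `H.iota j' b`
      subst h1
      subst h2
      have hpadj : (pieceG H (B j')).Adj a b := piece_adj (hB j') hab
      have hu := hPu j' a rfl
      intro m z hrep
      rcases iota_eq_cases (hrep : H.iota j' b = H.iota m z) with
        ⟨hb, hz, hjm⟩ | ⟨hb, hz, hjm, hbz⟩ | ⟨hb, hz, hzY, hm⟩ | ⟨hb, hz, hbY, hj'⟩
      · -- b = X, z = X, j' = m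
        subst hjm
        have hjm1 : PG.Reachable j (j' - 1) := hu.2 (hb ▸ hpadj.reachable)
        constructor
        · intro hXY
          have h9 : (pieceG H (B j')).Reachable H.X H.Y := hz ▸ hXY
          exact hjm1.trans (patG_adj_of_mem (mem_patOf.mpr h9)).reachable
        · intro _; exact hjm1
      · -- b ≠ X, z ≠ X, j' = m, b = z
        subst hjm
        subst hbz
        constructor
        · intro hzY
          exact hu.1 (hpadj.reachable.trans hzY)
        · intro hzX
          exact hu.2 (hpadj.reachable.trans hzX)
      · -- b = X, z = Y, m = j' - 1
        subst hm
        have hjm1 : PG.Reachable j (j' - 1) := hu.2 (hb ▸ hpadj.reachable)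
        constructor
        · intro _; exact hjm1
        · intro hYX
          have h9 : (pieceG H (B (j' - 1))).Reachable H.X H.Y := hzY ▸ hYX.symm
          exact hjm1.trans (patG_adj_of_mem (mem_patOf.mpr h9)).symm.reachable
      · -- b = Y, z = X, j' = m - 1
        have hjj' : PG.Reachable j j' := hu.1 (hbY ▸ hpadj.reachable)
        constructor
        · intro hXY
          have h9 : (pieceG H (B m)).Reachable H.X H.Y := hz ▸ hXY
          have hadj := patG_adj_of_mem (T := patOf H B) (c := c) (mem_patOf.mpr h9)
          rw [← hj'] at hadj
          exact hjj'.trans hadj.reachable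
        · intro _
          rw [← hj']
          exact hjj'
    · -- chord
      rcases hchord with ⟨h1, h2⟩ | ⟨h1, h2⟩
      · subst h1; subst h2
        intro m z hrep
        exact hcornrP 2 ((hcornr 0 hPu).1.trans (patG_adj_chord hc).reachable) m z hrep
      · subst h1; subst h2
        intro m z hrep
        exact hcornrP 0 ((hcornr 2 hPu).1.trans (patG_adj_chord hc).symm.reachable) m z hrep
  have hbase : P (cornr H j) := hcornrP j (Reachable.refl j)
  exact (hcornr k (reach_closed hclosed h hbase)).1




instance (T : Finset (Fin 4)) (c : Bool) : DecidableRel (patG T c).Adj := fun _ _ =>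
  inferInstanceAs (Decidable (_ ∧ _))

/-- Tree patterns: all corners joined, and three pattern edges. -/
def treePat (T : Finset (Fin 4)) (c : Bool) : Prop :=
  (∀ j, (patG T c).Reachable j 0) ∧ T.card + (if c then 1 else 0) = 3

instance (T : Finset (Fin 4)) (c : Bool) : Decidable (treePat T c) :=
  inferInstanceAs (Decidable (_ ∧ _))

/-- Two-forest patterns: all corners reach corner `1` or `3`, which are separated,
and two pattern edges. -/
def forestPat (T : Finset (Fin 4)) (c : Bool) : Prop :=
  (∀ j, (patG T c).Reachable j 1 ∨ (patG T c).Reachable j 3) ∧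
    ¬(patG T c).Reachable 1 3 ∧ T.card + (if c then 1 else 0) = 2

instance (T : Finset (Fin 4)) (c : Bool) : Decidable (forestPat T c) :=
  inferInstanceAs (Decidable (_ ∧ _))

variable {H : TTG}

/-- A "good piece": acyclic and every vertex joined to one of the terminals. -/
def goodP (H : TTG) (D : Finset (Sym2 H.V)) : Prop :=
  (pieceG H D).IsAcyclic ∧
    ∀ v, (pieceG H D).Reachable v H.X ∨ (pieceG H D).Reachable v H.Y

lemma piece_connected {D : Finset (Sym2 H.V)}
    (hgood : ∀ v, (pieceG H D).Reachable v H.X ∨ (pieceG H D).Reachable v H.Y)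
    (hc : conn H D) : (pieceG H D).Connected := by
  haveI : Nonempty H.V := ⟨H.X⟩
  refine ⟨fun u v => ?_⟩
  have key : ∀ w, (pieceG H D).Reachable w H.X := by
    intro w
    rcases hgood w with h | h
    · exact h
    · exact h.trans hc.symm
  exact (key u).trans (key v).symm

lemma two_le_card_V : 2 ≤ Fintype.card H.V := by
  haveI : Nontrivial H.V := ⟨H.X, H.Y, H.hXY⟩
  exact Fintype.one_lt_card

lemma card_W_eq : Fintype.card (W H) = 4 * (Fintype.card H.V - 1) := by
  have h1 : Fintype.card {v : H.V // v ≠ H.X} = Fintype.card H.V - 1 := by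
    have h0 : Fintype.card {v : H.V // ¬v = H.X} =
        Fintype.card H.V - Fintype.card {v : H.V // v = H.X} :=
      Fintype.card_subtype_compl _
    rw [Fintype.card_subtype_eq] at h0
    rw [Fintype.card_congr (Equiv.subtypeEquivRight (fun _ => Iff.rfl)
      : {v : H.V // v ≠ H.X} ≃ {v : H.V // ¬v = H.X})]
    exact h0
  rw [Fintype.card_prod, h1]
  norm_num

lemma piece_card_conn {D : Finset (Sym2 H.V)} (hD : D ⊆ H.G.edgeFinset)
    (hg : goodP H D) (hc : conn H D) : Fintype.card H.V = D.card + 1 :=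
  card_of_tree D (fun _ he => nondiag_of_mem_edgeFinset (hD he))
    (piece_connected hg.2 hc) hg.1

lemma piece_card_noconn {D : Finset (Sym2 H.V)} (hD : D ⊆ H.G.edgeFinset)
    (hg : goodP H D) (hc : ¬conn H D) : Fintype.card H.V = D.card + 2 :=
  (forest_iff_card D (fun _ he => nondiag_of_mem_edgeFinset (hD he)) H.hXY
    (fun v => hg.2 v) hc).mp hg.1

variable {B : Fin 4 → Finset (Sym2 H.V)} {c : Bool}

lemma assemble_subset_edgeFinset (hB : ∀ i, B i ⊆ H.G.edgeFinset) :
    assemble H B c ⊆ (TTG.cyclicStep true H).G.edgeFinset := by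
  intro e he
  rcases (mem_assemble B c).mp he with ⟨i, b, hb, rfl⟩ | ⟨_, rfl⟩
  · exact mem_edgeFinset_step.mpr (Or.inl ⟨i, b, hB i hb, rfl⟩)
  · exact mem_edgeFinset_step.mpr (Or.inr rfl)

lemma assemble_nondiag (hB : ∀ i, B i ⊆ H.G.edgeFinset) :
    ∀ e ∈ assemble H B c, ¬e.IsDiag := fun e he =>
  nondiag_of_mem_edgeFinset (assemble_subset_edgeFinset hB he)

/-- The cardinality bookkeeping: number of edges of the assembled graph. -/
lemma card_assemble_eq (hB : ∀ i, B i ⊆ H.G.edgeFinset) (hg : ∀ i, goodP H (B i)) :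
    (assemble H B c).card + 8 =
      4 * Fintype.card H.V + (patOf H B).card + (if c then 1 else 0) := by
  rw [card_assemble B c hB]
  have key : ∀ i : Fin 4, (B i).card + (if conn H (B i) then 1 else 2) = Fintype.card H.V := by
    intro i
    by_cases hc : conn H (B i)
    · rw [if_pos hc, (piece_card_conn (hB i) (hg i) hc)]
    · rw [if_neg hc, (piece_card_noconn (hB i) (hg i) hc)]
  have hsum : (∑ i, (B i).card) + (∑ i : Fin 4, (if conn H (B i) then 1 else 2)) =
      4 * Fintype.card H.V := by
    rw [← Finset.sum_add_distrib]
    rw [Finset.sum_congr rfl (fun i _ => key i)]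
    simp [Finset.card_univ]
  have hsum2 : (∑ i : Fin 4, (if conn H (B i) then 1 else 2)) + (patOf H B).card = 8 := by
    rw [Finset.sum_ite, Finset.sum_const, Finset.sum_const, smul_eq_mul, smul_eq_mul]
    have h48 : (Finset.univ.filter (fun i => conn H (B i))).card +
        (Finset.univ.filter (fun i => ¬conn H (B i))).card = 4 := by
      rw [Finset.card_filter_add_card_filter_not]
      simp
    have : patOf H B = Finset.univ.filter (fun i => conn H (B i)) := rfl
    rw [this]
    omega
  omega

lemma patG_connected_iff {T : Finset (Fin 4)} :
    (∀ j, (patG T c).Reachable j 0) ↔ (patG T c).Connected := by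
  constructor
  · intro h
    exact ⟨fun u v => (h u).trans (h v).symm⟩
  · intro h j
    exact h.preconnected j 0

/-- Main decomposition theorem, spanning-tree case. -/
theorem whole_tree_iff (hB : ∀ i, B i ⊆ H.G.edgeFinset) :
    ((wholeG H (assemble H B c)).Connected ∧ (wholeG H (assemble H B c)).IsAcyclic) ↔
      ((∀ i, goodP H (B i)) ∧ treePat (patOf H B) c) := by
  constructor
  · rintro ⟨hconn, hacyc⟩
    have hpiece_acyc : ∀ i, (pieceG H (B i)).IsAcyclic := by
      intro i
      exact isAcyclic_comap ⟨H.iota i, fun hab => adj_lift hB hab⟩ (iota_injective i) hacyc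
    have hgood : ∀ i, goodP H (B i) := by
      intro i
      refine ⟨hpiece_acyc i, ?_⟩
      exact fun x => piece_good_of_corner_reach hB
        (fun u => ⟨0, hconn.preconnected u (cornr H 0)⟩) i x
    refine ⟨hgood, ?_, ?_⟩
    · intro j
      exact pat_reach_of_whole hB (hconn.preconnected (cornr H j) (cornr H 0))
    · -- edge count
      have hcard := card_of_tree (assemble H B c) (assemble_nondiag hB) hconn hacyc
      have hW := card_W_eq (H := H)
      have h2 := two_le_card_V (H := H)
      have hcnt := card_assemble_eq (c := c) hB hgood
      have hT4 : (patOf H B).card ≤ 4 := by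
        have := Finset.card_le_card (Finset.subset_univ (patOf H B))
        simpa using this
      omega
  · rintro ⟨hgood, hpat, hcnt⟩
    have hconn : (wholeG H (assemble H B c)).Connected := by
      haveI : Nonempty (W H) := ⟨cornr H 0⟩
      refine ⟨fun u v => ?_⟩
      have key : ∀ w : W H, (wholeG H (assemble H B c)).Reachable w (cornr H 0) := by
        rintro ⟨m, x, hx⟩
        have hrep : (⟨m, x, hx⟩ : W H) = H.iota m x := (iota_ne hx m).symm
        rw [hrep]
        have hcor : ∀ j, (wholeG H (assemble H B c)).Reachable (cornr H j) (cornr H 0) :=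
          fun j => patG_reach_lift hB (hpat j)
        rcases (hgood m).2 x with h | h
        · have := reach_lift (c := c) hB h
          rw [iota_X] at this
          exact this.trans (hcor (m - 1))
        · have := reach_lift (c := c) hB h
          rw [iota_Y] at this
          exact this.trans (hcor m)
      exact (key u).trans (key v).symm
    refine ⟨hconn, ?_⟩
    apply acyclic_of_connected_card _ hconn
    have hW := card_W_eq (H := H)
    have h2 := two_le_card_V (H := H)
    have hcnt2 := card_assemble_eq (c := c) hB hgood
    omega

/-- Main decomposition theorem, two-forest case. -/
theorem whole_forest_iff (hB : ∀ i, B i ⊆ H.G.edgeFinset) :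
    ((wholeG H (assemble H B c)).IsAcyclic ∧
      (∀ u : W H, (wholeG H (assemble H B c)).Reachable u (cornr H 1) ∨
        (wholeG H (assemble H B c)).Reachable u (cornr H 3)) ∧
      ¬(wholeG H (assemble H B c)).Reachable (cornr H 1) (cornr H 3)) ↔
      ((∀ i, goodP H (B i)) ∧ forestPat (patOf H B) c) := by
  have hc13 : cornr H 1 ≠ cornr H 3 := by
    intro h
    have : (1 : Fin 4) = 3 := congrArg Prod.fst h
    exact absurd this (by decide)
  constructor
  · rintro ⟨hacyc, hgood13, hnr⟩
    have hpiece_acyc : ∀ i, (pieceG H (B i)).IsAcyclic := by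
      intro i
      exact isAcyclic_comap ⟨H.iota i, fun hab => adj_lift hB hab⟩ (iota_injective i) hacyc
    have hgood : ∀ i, goodP H (B i) := by
      intro i
      refine ⟨hpiece_acyc i, ?_⟩
      refine fun x => piece_good_of_corner_reach (c := c) hB (fun u => ?_) i x
      rcases hgood13 u with h | h
      · exact ⟨1, h⟩
      · exact ⟨3, h⟩
    refine ⟨hgood, ?_, ?_, ?_⟩
    · intro j
      rcases hgood13 (cornr H j) with h | h
      · exact Or.inl (pat_reach_of_whole hB h)
      · exact Or.inr (pat_reach_of_whole hB h)
    · intro h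
      exact hnr (patG_reach_lift hB h)
    · -- edge count
      have hcard : Fintype.card (W H) = (assemble H B c).card + 2 := by
        refine (forest_iff_card (x := cornr H 1) (y := cornr H 3) _
          (assemble_nondiag hB) hc13 ?_ ?_).mp hacyc
        · exact hgood13
        · exact hnr
      have hW := card_W_eq (H := H)
      have h2 := two_le_card_V (H := H)
      have hcnt := card_assemble_eq (c := c) hB hgood
      have hT4 : (patOf H B).card ≤ 4 := by
        have := Finset.card_le_card (Finset.subset_univ (patOf H B))
        simpa using this
      omega
  · rintro ⟨hgood, hpat13, hpatnr, hcnt⟩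
    have hgood13 : ∀ u : W H, (wholeG H (assemble H B c)).Reachable u (cornr H 1) ∨
        (wholeG H (assemble H B c)).Reachable u (cornr H 3) := by
      rintro ⟨m, x, hx⟩
      have hrep : (⟨m, x, hx⟩ : W H) = H.iota m x := (iota_ne hx m).symm
      rw [hrep]
      have hcor : ∀ j, (wholeG H (assemble H B c)).Reachable (cornr H j) (cornr H 1) ∨
          (wholeG H (assemble H B c)).Reachable (cornr H j) (cornr H 3) := by
        intro j
        rcases hpat13 j with h | h
        · exact Or.inl (patG_reach_lift hB h)
        · exact Or.inr (patG_reach_lift hB h)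
      have hxc : ∃ j, (wholeG H (assemble H B c)).Reachable (H.iota m x) (cornr H j) := by
        rcases (hgood m).2 x with h | h
        · have := reach_lift (c := c) hB h
          rw [iota_X] at this
          exact ⟨m - 1, this⟩
        · have := reach_lift (c := c) hB h
          rw [iota_Y] at this
          exact ⟨m, this⟩
      obtain ⟨j, hj⟩ := hxc
      rcases hcor j with h | h
      · exact Or.inl (hj.trans h)
      · exact Or.inr (hj.trans h)
    have hnr : ¬(wholeG H (assemble H B c)).Reachable (cornr H 1) (cornr H 3) := by
      intro h
      exact hpatnr (pat_reach_of_whole hB h)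
    refine ⟨?_, hgood13, hnr⟩
    refine (forest_iff_card (x := cornr H 1) (y := cornr H 3) _
      (assemble_nondiag hB) hc13 hgood13 hnr).mpr ?_
    have hW := card_W_eq (H := H)
    have h2 := two_le_card_V (H := H)
    have hcnt2 := card_assemble_eq (c := c) hB hgood
    omega




/-- Spanning trees of `H` (as edge sets). -/
def TreeSet (H : TTG) : Type := {A : Finset (Sym2 H.V) // A ⊆ H.G.edgeFinset ∧
  (fromEdgeSet (A : Set (Sym2 H.V))).Connected ∧
  (fromEdgeSet (A : Set (Sym2 H.V))).IsAcyclic}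

/-- Spanning two-forests of `H` separating the two terminals. -/
def ForSet (H : TTG) : Type := {A : Finset (Sym2 H.V) // A ⊆ H.G.edgeFinset ∧
  (fromEdgeSet (A : Set (Sym2 H.V))).IsAcyclic ∧
  (∀ v, (fromEdgeSet (A : Set (Sym2 H.V))).Reachable v H.X ∨
    (fromEdgeSet (A : Set (Sym2 H.V))).Reachable v H.Y) ∧
  ¬(fromEdgeSet (A : Set (Sym2 H.V))).Reachable H.X H.Y}

variable {H : TTG}

/-- Configurations with pattern predicate `P`. -/
def Cfg (H : TTG) (P : Finset (Fin 4) → Bool → Prop) : Type :=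
  {q : (Fin 4 → Finset (Sym2 H.V)) × Bool //
    (∀ i, q.1 i ⊆ H.G.edgeFinset) ∧ (∀ i, goodP H (q.1 i)) ∧ P (patOf H q.1) q.2}

def patFn (P : Finset (Fin 4) → Bool → Prop) :
    Cfg H P → {p : Finset (Fin 4) × Bool // P p.1 p.2} :=
  fun q => ⟨(patOf H q.val.1, q.val.2), q.prop.2.2⟩

/-- Component type of a configuration fiber. -/
def fib (H : TTG) (p : Finset (Fin 4) × Bool) (i : Fin 4) : Type :=
  {D : Finset (Sym2 H.V) // D ⊆ H.G.edgeFinset ∧ goodP H D ∧ (conn H D ↔ i ∈ p.1)}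

instance (p : Finset (Fin 4) × Bool) (i : Fin 4) : Finite (fib H p i) :=
  inferInstanceAs (Finite {D : Finset (Sym2 H.V) // _})

def fibEquiv (P : Finset (Fin 4) → Bool → Prop) (p : {p : Finset (Fin 4) × Bool // P p.1 p.2}) :
    {q : Cfg H P // patFn P q = p} ≃ ∀ i, fib H p.val i where
  toFun q := fun i => ⟨q.val.val.1 i, q.val.prop.1 i, q.val.prop.2.1 i, by
    have h1 : patOf H q.val.val.1 = p.val.1 :=
      congrArg Prod.fst (congrArg Subtype.val q.prop)
    rw [← h1]
    exact mem_patOf.symm⟩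
  invFun g := by
    have hpat : patOf H (fun i => (g i).val) = p.val.1 := by
      ext m
      rw [mem_patOf]
      exact (g m).prop.2.2
    exact ⟨⟨⟨fun i => (g i).val, p.val.2⟩, fun i => (g i).prop.1, fun i => (g i).prop.2.1,
      by rw [hpat]; exact p.prop⟩,
      Subtype.ext (Prod.ext hpat rfl)⟩
  left_inv q := by
    apply Subtype.ext
    apply Subtype.ext
    have h2 : q.val.val.2 = p.val.2 := congrArg Prod.snd (congrArg Subtype.val q.prop)
    exact Prod.ext rfl h2.symm
  right_inv g := by
    funext i
    apply Subtype.ext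
    rfl

def decompEquiv (P : Finset (Fin 4) → Bool → Prop) :
    Cfg H P ≃ Σ p : {p : Finset (Fin 4) × Bool // P p.1 p.2}, ∀ i, fib H p.val i :=
  (Equiv.sigmaFiberEquiv (patFn P)).symm.trans (Equiv.sigmaCongrRight (fibEquiv P))

/-- Spanning trees of the merge correspond to tree-pattern configurations. -/
def treeCfgEquiv (H : TTG) : TreeSet (TTG.cyclicStep true H) ≃ Cfg H treePat where
  toFun A := ⟨extract H A.val, extract_fst_subset A.val, by
    have hsub : ∀ i, (extract H A.val).1 i ⊆ H.G.edgeFinset := extract_fst_subset A.val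
    have heq : assemble H (extract H A.val).1 (extract H A.val).2 = A.val :=
      assemble_extract A.prop.1
    have h1 : (wholeG H (assemble H (extract H A.val).1 (extract H A.val).2)).Connected := by
      rw [heq]; exact A.prop.2.1
    have h2 : (wholeG H (assemble H (extract H A.val).1 (extract H A.val).2)).IsAcyclic := by
      rw [heq]; exact A.prop.2.2
    exact (whole_tree_iff hsub).mp ⟨h1, h2⟩⟩
  invFun q := ⟨assemble H q.val.1 q.val.2, assemble_subset_edgeFinset q.prop.1,
    ((whole_tree_iff q.prop.1).mpr ⟨q.prop.2.1, q.prop.2.2⟩).1,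
    ((whole_tree_iff q.prop.1).mpr ⟨q.prop.2.1, q.prop.2.2⟩).2⟩
  left_inv A := Subtype.ext (assemble_extract A.prop.1)
  right_inv q := by
    apply Subtype.ext
    have h := extract_assemble q.val.1 q.val.2 q.prop.1
    exact Prod.ext h.1 h.2

/-- Separating two-forests of the merge correspond to forest-pattern configurations. -/
def forCfgEquiv (H : TTG) : ForSet (TTG.cyclicStep true H) ≃ Cfg H forestPat where
  toFun A := ⟨extract H A.val, extract_fst_subset A.val, by
    have hsub : ∀ i, (extract H A.val).1 i ⊆ H.G.edgeFinset := extract_fst_subset A.val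
    have heq : assemble H (extract H A.val).1 (extract H A.val).2 = A.val :=
      assemble_extract A.prop.1
    have h1 : (wholeG H (assemble H (extract H A.val).1 (extract H A.val).2)).IsAcyclic := by
      rw [heq]; exact A.prop.2.1
    have h2 : ∀ u : W H,
        (wholeG H (assemble H (extract H A.val).1 (extract H A.val).2)).Reachable u (cornr H 1) ∨
        (wholeG H (assemble H (extract H A.val).1 (extract H A.val).2)).Reachable u
          (cornr H 3) := by
      rw [heq]
      intro u
      exact (A.prop.2.2.1 u).symm
    have h3 : ¬(wholeG H (assemble H (extract H A.val).1 (extract H A.val).2)).Reachable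
        (cornr H 1) (cornr H 3) := by
      rw [heq]
      intro hr
      exact A.prop.2.2.2 hr.symm
    exact (whole_forest_iff hsub).mp ⟨h1, h2, h3⟩⟩
  invFun q := ⟨assemble H q.val.1 q.val.2, assemble_subset_edgeFinset q.prop.1, by
    have h := (whole_forest_iff q.prop.1).mpr ⟨q.prop.2.1, q.prop.2.2⟩
    exact ⟨h.1, fun v => (h.2.1 v).symm, fun hr => h.2.2 hr.symm⟩⟩
  left_inv A := Subtype.ext (assemble_extract A.prop.1)
  right_inv q := by
    apply Subtype.ext
    have h := extract_assemble q.val.1 q.val.2 q.prop.1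
    exact Prod.ext h.1 h.2

lemma card_fib (p : Finset (Fin 4) × Bool) (i : Fin 4) {k : ℕ}
    (hT : Nat.card (TreeSet H) = k) (hF : Nat.card (ForSet H) = k) :
    Nat.card (fib H p i) = k := by
  by_cases hi : i ∈ p.1
  · rw [← hT]
    apply Nat.card_congr
    apply Equiv.subtypeEquivRight
    intro D
    constructor
    · rintro ⟨h1, ⟨hac, hgood⟩, hconn⟩
      exact ⟨h1, piece_connected hgood (hconn.mpr hi), hac⟩
    · rintro ⟨h1, hc, hac⟩
      exact ⟨h1, ⟨hac, fun v => Or.inl (hc.preconnected v H.X)⟩,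
        iff_of_true (hc.preconnected H.X H.Y) hi⟩
  · rw [← hF]
    apply Nat.card_congr
    apply Equiv.subtypeEquivRight
    intro D
    constructor
    · rintro ⟨h1, ⟨hac, hgood⟩, hconn⟩
      exact ⟨h1, hac, hgood, fun hr => hi (hconn.mp hr)⟩
    · rintro ⟨h1, hac, hgood, hnr⟩
      exact ⟨h1, ⟨hac, hgood⟩, iff_of_false hnr hi⟩

lemma card_cfg (P : Finset (Fin 4) → Bool → Prop) {k n : ℕ}
    (hT : Nat.card (TreeSet H) = k) (hF : Nat.card (ForSet H) = k)
    (hP : Nat.card {p : Finset (Fin 4) × Bool // P p.1 p.2} = n) :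
    Nat.card (Cfg H P) = n * k ^ 4 := by
  rw [Nat.card_congr (decompEquiv P)]
  haveI : ∀ (p : {p : Finset (Fin 4) × Bool // P p.1 p.2}) (i : Fin 4),
      Fintype (fib H p.val i) := fun p i => Fintype.ofFinite _
  haveI : Fintype {p : Finset (Fin 4) × Bool // P p.1 p.2} := Fintype.ofFinite _
  rw [Nat.card_eq_fintype_card, Fintype.card_sigma]
  have hterm : ∀ p : {p : Finset (Fin 4) × Bool // P p.1 p.2},
      Fintype.card (∀ i, fib H p.val i) = k ^ 4 := by
    intro p
    rw [← Nat.card_eq_fintype_card, Nat.card_pi]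
    rw [Finset.prod_congr rfl (fun i _ => card_fib p.val i hT hF)]
    rw [Finset.prod_const]
    norm_num
  rw [Finset.sum_congr rfl (fun p _ => hterm p), Finset.sum_const, smul_eq_mul]
  rw [Finset.card_univ, ← Nat.card_eq_fintype_card, hP]




lemma card_treePat : Nat.card {p : Finset (Fin 4) × Bool // treePat p.1 p.2} = 8 := by
  rw [Nat.card_eq_fintype_card, Fintype.card_subtype]
  decide

lemma card_forestPat : Nat.card {p : Finset (Fin 4) × Bool // forestPat p.1 p.2} = 8 := by
  rw [Nat.card_eq_fintype_card, Fintype.card_subtype]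
  decide

variable {H : TTG}

theorem step_tree_count {k : ℕ} (hT : Nat.card (TreeSet H) = k)
    (hF : Nat.card (ForSet H) = k) :
    Nat.card (TreeSet (TTG.cyclicStep true H)) = 8 * k ^ 4 := by
  rw [Nat.card_congr (treeCfgEquiv H)]
  exact card_cfg treePat hT hF card_treePat

theorem step_forest_count {k : ℕ} (hT : Nat.card (TreeSet H) = k)
    (hF : Nat.card (ForSet H) = k) :
    Nat.card (ForSet (TTG.cyclicStep true H)) = 8 * k ^ 4 := by
  rw [Nat.card_congr (forCfgEquiv H)]
  exact card_cfg forestPat hT hF card_forestPat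

section Base

variable {V : Type} [Fintype V]

lemma elem_of_card_two (hcard : Fintype.card V = 2) {x y : V} (hxy : x ≠ y) :
    ∀ z, z = x ∨ z = y := by
  intro z
  by_contra hcon
  push_neg at hcon
  have hsub : ({z, x, y} : Finset V).card ≤ 2 :=
    hcard ▸ Finset.card_le_card (Finset.subset_univ _)
  rw [Finset.card_insert_of_notMem (by simp [hcon.1, hcon.2]),
    Finset.card_insert_of_notMem (by simp [hxy])] at hsub
  simp at hsub

lemma sym2_eq_of_card_two (hcard : Fintype.card V = 2) {x y : V} (hxy : x ≠ y)
    {e : Sym2 V} (he : ¬e.IsDiag) : e = s(x, y) := by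
  induction e with
  | _ u v =>
  rw [Sym2.mk_isDiag_iff] at he
  rcases elem_of_card_two hcard hxy u with rfl | rfl <;>
    rcases elem_of_card_two hcard hxy v with rfl | rfl
  · exact absurd rfl he
  · rfl
  · exact Sym2.eq_swap
  · exact absurd rfl he

end Base

lemma base_card : Fintype.card TTG.base.V = 2 := by
  have : TTG.base.V = Fin 2 := rfl
  rw [Fintype.card_congr (Equiv.cast this)]
  simp

lemma base_G_eq : TTG.base.G = (⊤ : SimpleGraph TTG.base.V) := rfl

lemma base_adj : TTG.base.G.Adj TTG.base.X TTG.base.Y := by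
  rw [base_G_eq, top_adj]
  exact TTG.base.hXY

lemma base_edge_eq : ∀ e ∈ TTG.base.G.edgeFinset, e = s(TTG.base.X, TTG.base.Y) := by
  intro e he
  rw [mem_edgeFinset] at he
  exact sym2_eq_of_card_two base_card TTG.base.hXY
    (TTG.base.G.not_isDiag_of_mem_edgeSet he)

lemma base_singleton_connected :
    (fromEdgeSet (({s(TTG.base.X, TTG.base.Y)} : Finset (Sym2 TTG.base.V)) :
      Set (Sym2 TTG.base.V))).Connected := by
  have hadj : (fromEdgeSet (({s(TTG.base.X, TTG.base.Y)} : Finset (Sym2 TTG.base.V)) :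
      Set (Sym2 TTG.base.V))).Adj TTG.base.X TTG.base.Y := by
    rw [fromEdgeSet_adj]
    exact ⟨by simp, TTG.base.hXY⟩
  haveI : Nonempty TTG.base.V := ⟨TTG.base.X⟩
  refine ⟨fun u v => ?_⟩
  have key : ∀ w, (fromEdgeSet (({s(TTG.base.X, TTG.base.Y)} : Finset (Sym2 TTG.base.V)) :
      Set (Sym2 TTG.base.V))).Reachable w TTG.base.X := by
    intro w
    rcases elem_of_card_two base_card TTG.base.hXY w with rfl | rfl
    · exact Reachable.refl _
    · exact hadj.symm.reachable
  exact (key u).trans (key v).symm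

lemma base_tree_count : Nat.card (TreeSet TTG.base) = 1 := by
  rw [Nat.card_eq_one_iff_unique]
  constructor
  · constructor
    intro A A'
    have key : ∀ C : TreeSet TTG.base, C.val = {s(TTG.base.X, TTG.base.Y)} := by
      rintro ⟨C, hsub, hconn, hacyc⟩
      have hC : C ⊆ {s(TTG.base.X, TTG.base.Y)} := by
        intro e he
        rw [Finset.mem_singleton]
        exact base_edge_eq e (hsub he)
      rcases Finset.subset_singleton_iff.mp hC with rfl | rfl
      · exfalso
        have hr : (fromEdgeSet ((∅ : Finset (Sym2 TTG.base.V)) :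
            Set (Sym2 TTG.base.V))).Reachable TTG.base.X TTG.base.Y :=
          hconn.preconnected _ _
        rw [Finset.coe_empty, fromEdgeSet_empty] at hr
        exact absurd (reachable_bot.mp hr) TTG.base.hXY
      · rfl
    exact Subtype.ext ((key A).trans (key A').symm)
  · refine ⟨⟨{s(TTG.base.X, TTG.base.Y)}, ?_, base_singleton_connected, ?_⟩⟩
    · intro e he
      rw [Finset.mem_singleton] at he
      subst he
      rw [mem_edgeFinset, mem_edgeSet]
      exact base_adj
    · apply acyclic_of_connected_card _ base_singleton_connected
      rw [base_card, Finset.card_singleton]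

lemma base_forest_count : Nat.card (ForSet TTG.base) = 1 := by
  rw [Nat.card_eq_one_iff_unique]
  have hbot : fromEdgeSet ((∅ : Finset (Sym2 TTG.base.V)) : Set (Sym2 TTG.base.V)) =
      (⊥ : SimpleGraph TTG.base.V) := by
    rw [Finset.coe_empty, fromEdgeSet_empty]
  constructor
  · constructor
    intro A A'
    have key : ∀ C : ForSet TTG.base, C.val = (∅ : Finset (Sym2 TTG.base.V)) := by
      rintro ⟨C, hsub, hacyc, hgood, hnr⟩
      have hC : C ⊆ {s(TTG.base.X, TTG.base.Y)} := by
        intro e he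
        rw [Finset.mem_singleton]
        exact base_edge_eq e (hsub he)
      rcases Finset.subset_singleton_iff.mp hC with rfl | rfl
      · rfl
      · exfalso
        apply hnr
        refine Adj.reachable ?_
        rw [fromEdgeSet_adj]
        exact ⟨by simp, TTG.base.hXY⟩
    exact Subtype.ext ((key A).trans (key A').symm)
  · refine ⟨⟨(∅ : Finset (Sym2 TTG.base.V)), ?_, ?_, ?_, ?_⟩⟩
    · intro e he
      exact absurd he (Finset.notMem_empty e)
    · rw [hbot]
      exact isAcyclic_bot
    · intro v
      rcases elem_of_card_two base_card TTG.base.hXY v with rfl | rfl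
      · exact Or.inl (Reachable.refl _)
      · exact Or.inr (Reachable.refl _)
    · rw [hbot]
      intro h
      exact absurd (reachable_bot.mp h) TTG.base.hXY

theorem main_counts : ∀ n : ℕ,
    Nat.card (TreeSet (fractal n)) = 2 ^ (4 ^ n - 1) ∧
    Nat.card (ForSet (fractal n)) = 2 ^ (4 ^ n - 1) := by
  intro n
  induction n with
  | zero =>
    constructor
    · exact base_tree_count
    · exact base_forest_count
  | succ n ih =>
    obtain ⟨hT, hF⟩ := ih
    have harith : 8 * (2 ^ (4 ^ n - 1)) ^ 4 = 2 ^ (4 ^ (n + 1) - 1) := by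
      rw [← pow_mul, show (8 : ℕ) = 2 ^ 3 from rfl, ← pow_add]
      congr 1
      have h1 : 1 ≤ 4 ^ n := Nat.one_le_pow _ _ (by norm_num)
      have h2 : (4 : ℕ) ^ (n + 1) = 4 * 4 ^ n := by rw [pow_succ]; ring
      omega
    constructor
    · show Nat.card (TreeSet (TTG.cyclicStep true (fractal n))) = _
      rw [step_tree_count hT hF, harith]
    · show Nat.card (ForSet (TTG.cyclicStep true (fractal n))) = _
      rw [step_forest_count hT hF, harith]



end FracProof
end FracProofSection

/-- The number of spanning trees of the fractal lattice `G_n` is `2 ^ (4 ^ n - 1)`. -/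
theorem fractal_spanningTreeCount (n : ℕ) :
    spanningTreeCount (fractal n).G = 2 ^ (4 ^ n - 1) := by
  have h := (FracProof.main_counts n).1
  rw [← h]
  rfl

end
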